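/- Zero-order approximation of the adjoint transform by the regularization operator (pointwise form of Lemma 'Approx T*'): let v : ℝ × ℝ → ℝ be Y-periodic in its second variable and Lipschitz in its first variable with constant L ≥ 0, uniformly in the second variable (|v(x, y) − v(x', y)| ≤ L·|x − x'| for all x, x', y). Then for every ε > 0 and every x ∈ ℝ, |(T_ε* v)(x) − (B_ε v)(x)| ≤ L·ε. -/

import Mathlib

open MeasureTheory intervalIntegral Set

/-- `kEps ε x = ⌊x/ε + 1/2⌋`. -/
noncomputable def kEps (ε x : ℝ) : ℤ := ⌊x / ε + 1 / 2⌋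

/-- `cEps ε x = ε * kEps ε x`. -/
noncomputable def cEps (ε x : ℝ) : ℝ := ε * (kEps ε x : ℝ)

/-- `yEps ε x = x/ε − kEps ε x`. -/
noncomputable def yEps (ε x : ℝ) : ℝ := x / ε - (kEps ε x : ℝ)

/-- The adjoint two-scale transform `(T_ε* w)(x) = ∫_{−1/2}^{1/2} w(c_ε(x) + ε·z, y_ε(x)) dz`. -/
noncomputable def twoScaleAdj (ε : ℝ) (w : ℝ → ℝ → ℝ) (x : ℝ) : ℝ :=
  ∫ z in (-(1:ℝ)/2)..(1/2), w (cEps ε x + ε * z) (yEps ε x)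

/-- The regularization operator `(B_ε w)(x) = w(x, x/ε)`. -/
noncomputable def regOp (ε : ℝ) (w : ℝ → ℝ → ℝ) (x : ℝ) : ℝ := w x (x / ε)

lemma per_int (v : ℝ → ℝ → ℝ) (hper : ∀ x y : ℝ, v x (y + 1) = v x y)
    (x y : ℝ) (n : ℤ) : v x (y + n) = v x y := by
  have hp : Function.Periodic (v x) 1 := hper x
  have := (hp.int_mul n) y
  simpa using this

theorem twoScaleAdj_approx_regOp (v : ℝ → ℝ → ℝ)
    (hper : ∀ x y : ℝ, v x (y + 1) = v x y)
    (L : ℝ) (hL : 0 ≤ L)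
    (hLip : ∀ x x' y : ℝ, |v x y - v x' y| ≤ L * |x - x'|)
    (ε : ℝ) (hε : 0 < ε) (x : ℝ) :
    |twoScaleAdj ε v x - regOp ε v x| ≤ L * ε := by
  set k := kEps ε x with hk
  set y := yEps ε x with hy
  set c := cEps ε x with hc
  have hx : c + ε * y = x := by
    simp only [hc, hy, cEps, yEps]
    field_simp
    ring
  have hreg : regOp ε v x = v x y := by
    have : x / ε = y + (k : ℝ) := by simp [hy, yEps, hk]
    rw [regOp, this, per_int v hper x y k]
  -- bounds on y
  have hy1 : -(1:ℝ)/2 ≤ y := by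
    have := Int.floor_le (x / ε + 1 / 2)
    simp only [hy, yEps, hk, kEps]
    linarith
  have hy2 : y < 1/2 := by
    have := Int.lt_floor_add_one (x / ε + 1 / 2)
    simp only [hy, yEps, hk, kEps]
    linarith
  -- continuity / integrability
  have hcontf : Continuous fun z : ℝ => v (c + ε * z) y := by
    apply LipschitzWith.continuous (K := ⟨L * ε, by positivity⟩)
    apply LipschitzWith.of_dist_le_mul
    intro a b
    simp only [Real.dist_eq, NNReal.coe_mk]
    calc |v (c + ε * a) y - v (c + ε * b) y| ≤ L * |(c + ε * a) - (c + ε * b)| :=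
          hLip _ _ _
      _ = L * ε * |a - b| := by
          rw [show (c + ε * a) - (c + ε * b) = ε * (a - b) by ring, abs_mul,
            abs_of_pos hε]; ring
  have hint : IntervalIntegrable (fun z : ℝ => v (c + ε * z) y) volume (-(1:ℝ)/2) (1/2) :=
    hcontf.intervalIntegrable _ _
  have hconst : IntervalIntegrable (fun _ : ℝ => v x y) volume (-(1:ℝ)/2) (1/2) :=
    intervalIntegrable_const
  have hsub : twoScaleAdj ε v x - regOp ε v x
      = ∫ z in (-(1:ℝ)/2)..(1/2), (v (c + ε * z) y - v x y) := by
    rw [intervalIntegral.integral_sub hint hconst, twoScaleAdj, hreg,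
      intervalIntegral.integral_const]
    norm_num
    rfl
  rw [hsub]
  have hbound : ∀ z ∈ Set.uIoc (-(1:ℝ)/2) (1/2),
      ‖v (c + ε * z) y - v x y‖ ≤ L * ε := by
    intro z hz
    rw [Set.uIoc_of_le (by norm_num)] at hz
    have hz1 : -(1:ℝ)/2 < z := hz.1
    have hz2 : z ≤ 1/2 := hz.2
    rw [Real.norm_eq_abs]
    calc |v (c + ε * z) y - v x y| ≤ L * |(c + ε * z) - x| := hLip _ _ _
      _ = L * (ε * |z - y|) := by
          rw [show (c + ε * z) - x = ε * (z - y) by rw [← hx]; ring, abs_mul,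
            abs_of_pos hε]
      _ ≤ L * (ε * 1) := by
          have : |z - y| ≤ 1 := by
            rw [abs_le]; constructor <;> linarith
          have := mul_le_mul_of_nonneg_left this (le_of_lt hε)
          exact mul_le_mul_of_nonneg_left this hL
      _ = L * ε := by ring
  have := intervalIntegral.norm_integral_le_of_norm_le_const
    (C := L * ε) (a := -(1:ℝ)/2) (b := 1/2)
    (f := fun z => v (c + ε * z) y - v x y) ?_
  · rw [Real.norm_eq_abs] at this
    calc |∫ z in (-(1:ℝ)/2)..(1/2), (v (c + ε * z) y - v x y)|
        ≤ L * ε * |1/2 - (-(1:ℝ)/2)| := this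
      _ = L * ε := by norm_num
  · intro z hz
    exact hbound z hz
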